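/- Let $A$ and $B$ be unit quaternions such that $A B = -B A$. Then there exists a unit quaternion $q$ such that $q A q^{-1} = i$ and $q B q^{-1} = j$. -/

import Mathlib

open Quaternion

private lemma helper_conj (X Y u : ℍ[ℝ]) (hu : u ≠ 0)
    (h1 : u * X = ⟨0, 1, 0, 0⟩ * u) (h2 : u * Y = ⟨0, 0, 1, 0⟩ * u) :
    ∃ q : ℍ[ℝ], ‖q‖ = 1 ∧
      q * X * q⁻¹ = (⟨0, 1, 0, 0⟩ : ℍ[ℝ]) ∧
      q * Y * q⁻¹ = (⟨0, 0, 1, 0⟩ : ℍ[ℝ]) := by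
  have hn : ‖u‖ ≠ 0 := norm_ne_zero_iff.2 hu
  have hq : (‖u‖⁻¹ • u) ≠ 0 := smul_ne_zero (inv_ne_zero hn) hu
  refine ⟨‖u‖⁻¹ • u, ?_, ?_, ?_⟩
  · rw [norm_smul, norm_inv, norm_norm, inv_mul_cancel₀ hn]
  · erw [mul_inv_eq_iff_eq_mul₀ hq, smul_mul_assoc, h1, mul_smul_comm]
  · erw [mul_inv_eq_iff_eq_mul₀ hq, smul_mul_assoc, h2, mul_smul_comm]

/-- Up to simultaneous conjugation by a unit quaternion, the only anticommuting pair of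
unit quaternions is `(i, j)`. -/
theorem stmt_5 (A B : ℍ[ℝ]) (hA : ‖A‖ = 1) (hB : ‖B‖ = 1)
    (h : A * B = -(B * A)) :
    ∃ q : ℍ[ℝ], ‖q‖ = 1 ∧
      q * A * q⁻¹ = (⟨0, 1, 0, 0⟩ : ℍ[ℝ]) ∧
      q * B * q⁻¹ = (⟨0, 0, 1, 0⟩ : ℍ[ℝ]) := by
  obtain ⟨a0, a1, a2, a3⟩ := A
  obtain ⟨b0, b1, b2, b3⟩ := B
  have hA2 : a0 ^ 2 + a1 ^ 2 + a2 ^ 2 + a3 ^ 2 = 1 := by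
    have h1 := Quaternion.normSq_eq_norm_mul_self (⟨a0, a1, a2, a3⟩ : ℍ[ℝ])
    erw [hA, Quaternion.normSq_def'] at h1
    simpa using h1
  have hB2 : b0 ^ 2 + b1 ^ 2 + b2 ^ 2 + b3 ^ 2 = 1 := by
    have h1 := Quaternion.normSq_eq_norm_mul_self (⟨b0, b1, b2, b3⟩ : ℍ[ℝ])
    erw [hB, Quaternion.normSq_def'] at h1
    simpa using h1
  erw [QuaternionAlgebra.mk_mul_mk, QuaternionAlgebra.mk_mul_mk, QuaternionAlgebra.neg_mk,
    QuaternionAlgebra.mk.injEq] at h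
  obtain ⟨h0, h1, h2, h3⟩ := h
  have hb0 : b0 = 0 := by
    linear_combination (a0 / 2) * h0 + (a1 / 2) * h1 + (a2 / 2) * h2 + (a3 / 2) * h3 - b0 * hA2
  have ha0 : a0 = 0 := by
    linear_combination (b0 / 2) * h0 + (b1 / 2) * h1 + (b2 / 2) * h2 + (b3 / 2) * h3 - a0 * hB2
  subst ha0 hb0
  have sa : a1 ^ 2 + a2 ^ 2 + a3 ^ 2 = 1 := by linear_combination hA2
  have sb : b1 ^ 2 + b2 ^ 2 + b3 ^ 2 = 1 := by linear_combination hB2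
  have dab : a1 * b1 + a2 * b2 + a3 * b3 = 0 := by linear_combination (-1 / 2) * h0
  have m0A : (⟨1 + b2 - 1*a2*b1 + a1 + a1*b2, -1*b3 + a3*b1 - 1*a1*b3, a3 + a3*b2 - 1*a2*b3, b1 + a3*b3 - 1*a2 + a2*b2 + a1*b1⟩ * ⟨0, a1, a2, a3⟩ : ℍ[ℝ]) = ⟨0, 1, 0, 0⟩ * ⟨1 + b2 - 1*a2*b1 + a1 + a1*b2, -1*b3 + a3*b1 - 1*a1*b3, a3 + a3*b2 - 1*a2*b3, b1 + a3*b3 - 1*a2 + a2*b2 + a1*b1⟩ := by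
    erw [QuaternionAlgebra.mk_mul_mk, QuaternionAlgebra.mk_mul_mk, QuaternionAlgebra.mk.injEq]
    refine ⟨?_, ?_, ?_, ?_⟩
    · linear_combination (b3) * sa + (-2*a3) * dab
    · linear_combination (1 + b2) * sa + (-2*a2) * dab
    · linear_combination (-1*b1) * sa + (2 + 2*a1) * dab
    · linear_combination (0:ℝ) * sa
  have m0B : (⟨1 + b2 - 1*a2*b1 + a1 + a1*b2, -1*b3 + a3*b1 - 1*a1*b3, a3 + a3*b2 - 1*a2*b3, b1 + a3*b3 - 1*a2 + a2*b2 + a1*b1⟩ * ⟨0, b1, b2, b3⟩ : ℍ[ℝ]) = ⟨0, 0, 1, 0⟩ * ⟨1 + b2 - 1*a2*b1 + a1 + a1*b2, -1*b3 + a3*b1 - 1*a1*b3, a3 + a3*b2 - 1*a2*b3, b1 + a3*b3 - 1*a2 + a2*b2 + a1*b1⟩ := by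
    erw [QuaternionAlgebra.mk_mul_mk, QuaternionAlgebra.mk_mul_mk, QuaternionAlgebra.mk.injEq]
    refine ⟨?_, ?_, ?_, ?_⟩
    · linear_combination (-1*a3) * sb
    · linear_combination (-1*a2) * sb
    · linear_combination (1 + a1) * sb
    · linear_combination (0:ℝ) * sa
  have m1A : (⟨-1*b3 + a3*b1 - 1*a1*b3, 1 - 1*b2 + a2*b1 + a1 - 1*a1*b2, b1 + a3*b3 + a2 + a2*b2 + a1*b1, a3 - 1*a3*b2 + a2*b3⟩ * ⟨0, a1, a2, a3⟩ : ℍ[ℝ]) = ⟨0, 1, 0, 0⟩ * ⟨-1*b3 + a3*b1 - 1*a1*b3, 1 - 1*b2 + a2*b1 + a1 - 1*a1*b2, b1 + a3*b3 + a2 + a2*b2 + a1*b1, a3 - 1*a3*b2 + a2*b3⟩ := by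
    erw [QuaternionAlgebra.mk_mul_mk, QuaternionAlgebra.mk_mul_mk, QuaternionAlgebra.mk.injEq]
    refine ⟨?_, ?_, ?_, ?_⟩
    · linear_combination (-1 + b2) * sa + (-2*a2) * dab
    · linear_combination (-1*b3) * sa + (2*a3) * dab
    · linear_combination (0:ℝ) * sa
    · linear_combination (b1) * sa + (-2 - 2*a1) * dab
  have m1B : (⟨-1*b3 + a3*b1 - 1*a1*b3, 1 - 1*b2 + a2*b1 + a1 - 1*a1*b2, b1 + a3*b3 + a2 + a2*b2 + a1*b1, a3 - 1*a3*b2 + a2*b3⟩ * ⟨0, b1, b2, b3⟩ : ℍ[ℝ]) = ⟨0, 0, 1, 0⟩ * ⟨-1*b3 + a3*b1 - 1*a1*b3, 1 - 1*b2 + a2*b1 + a1 - 1*a1*b2, b1 + a3*b3 + a2 + a2*b2 + a1*b1, a3 - 1*a3*b2 + a2*b3⟩ := by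
    erw [QuaternionAlgebra.mk_mul_mk, QuaternionAlgebra.mk_mul_mk, QuaternionAlgebra.mk.injEq]
    refine ⟨?_, ?_, ?_, ?_⟩
    · linear_combination (-1*a2) * sb
    · linear_combination (a3) * sb
    · linear_combination (0:ℝ) * sa
    · linear_combination (-1 - 1*a1) * sb
  have m2A : (⟨a3 + a3*b2 - 1*a2*b3, b1 - 1*a3*b3 + a2 - 1*a2*b2 - 1*a1*b1, 1 + b2 + a2*b1 - 1*a1 - 1*a1*b2, b3 + a3*b1 - 1*a1*b3⟩ * ⟨0, a1, a2, a3⟩ : ℍ[ℝ]) = ⟨0, 1, 0, 0⟩ * ⟨a3 + a3*b2 - 1*a2*b3, b1 - 1*a3*b3 + a2 - 1*a2*b2 - 1*a1*b1, 1 + b2 + a2*b1 - 1*a1 - 1*a1*b2, b3 + a3*b1 - 1*a1*b3⟩ := by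
    erw [QuaternionAlgebra.mk_mul_mk, QuaternionAlgebra.mk_mul_mk, QuaternionAlgebra.mk.injEq]
    refine ⟨?_, ?_, ?_, ?_⟩
    · linear_combination (-1*b1) * sa + (-2 + 2*a1) * dab
    · linear_combination (0:ℝ) * sa
    · linear_combination (-1*b3) * sa + (2*a3) * dab
    · linear_combination (1 + b2) * sa + (-2*a2) * dab
  have m2B : (⟨a3 + a3*b2 - 1*a2*b3, b1 - 1*a3*b3 + a2 - 1*a2*b2 - 1*a1*b1, 1 + b2 + a2*b1 - 1*a1 - 1*a1*b2, b3 + a3*b1 - 1*a1*b3⟩ * ⟨0, b1, b2, b3⟩ : ℍ[ℝ]) = ⟨0, 0, 1, 0⟩ * ⟨a3 + a3*b2 - 1*a2*b3, b1 - 1*a3*b3 + a2 - 1*a2*b2 - 1*a1*b1, 1 + b2 + a2*b1 - 1*a1 - 1*a1*b2, b3 + a3*b1 - 1*a1*b3⟩ := by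
    erw [QuaternionAlgebra.mk_mul_mk, QuaternionAlgebra.mk_mul_mk, QuaternionAlgebra.mk.injEq]
    refine ⟨?_, ?_, ?_, ?_⟩
    · linear_combination (-1 + a1) * sb
    · linear_combination (0:ℝ) * sa
    · linear_combination (a3) * sb
    · linear_combination (-1*a2) * sb
  have m3A : (⟨b1 - 1*a3*b3 - 1*a2 - 1*a2*b2 - 1*a1*b1, a3 - 1*a3*b2 + a2*b3, b3 + a3*b1 - 1*a1*b3, 1 - 1*b2 - 1*a2*b1 - 1*a1 + a1*b2⟩ * ⟨0, a1, a2, a3⟩ : ℍ[ℝ]) = ⟨0, 1, 0, 0⟩ * ⟨b1 - 1*a3*b3 - 1*a2 - 1*a2*b2 - 1*a1*b1, a3 - 1*a3*b2 + a2*b3, b3 + a3*b1 - 1*a1*b3, 1 - 1*b2 - 1*a2*b1 - 1*a1 + a1*b2⟩ := by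
    erw [QuaternionAlgebra.mk_mul_mk, QuaternionAlgebra.mk_mul_mk, QuaternionAlgebra.mk.injEq]
    refine ⟨?_, ?_, ?_, ?_⟩
    · linear_combination (0:ℝ) * sa
    · linear_combination (b1) * sa + (2 - 2*a1) * dab
    · linear_combination (-1 + b2) * sa + (-2*a2) * dab
    · linear_combination (b3) * sa + (-2*a3) * dab
  have m3B : (⟨b1 - 1*a3*b3 - 1*a2 - 1*a2*b2 - 1*a1*b1, a3 - 1*a3*b2 + a2*b3, b3 + a3*b1 - 1*a1*b3, 1 - 1*b2 - 1*a2*b1 - 1*a1 + a1*b2⟩ * ⟨0, b1, b2, b3⟩ : ℍ[ℝ]) = ⟨0, 0, 1, 0⟩ * ⟨b1 - 1*a3*b3 - 1*a2 - 1*a2*b2 - 1*a1*b1, a3 - 1*a3*b2 + a2*b3, b3 + a3*b1 - 1*a1*b3, 1 - 1*b2 - 1*a2*b1 - 1*a1 + a1*b2⟩ := by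
    erw [QuaternionAlgebra.mk_mul_mk, QuaternionAlgebra.mk_mul_mk, QuaternionAlgebra.mk.injEq]
    refine ⟨?_, ?_, ?_, ?_⟩
    · linear_combination (0:ℝ) * sa
    · linear_combination (1 - 1*a1) * sb
    · linear_combination (-1*a2) * sb
    · linear_combination (-1*a3) * sb
  by_cases c0 : (⟨1 + b2 - 1*a2*b1 + a1 + a1*b2, -1*b3 + a3*b1 - 1*a1*b3, a3 + a3*b2 - 1*a2*b3, b1 + a3*b3 - 1*a2 + a2*b2 + a1*b1⟩ : ℍ[ℝ]) = 0
  case neg => exact helper_conj _ _ _ c0 m0A m0B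
  by_cases c1 : (⟨-1*b3 + a3*b1 - 1*a1*b3, 1 - 1*b2 + a2*b1 + a1 - 1*a1*b2, b1 + a3*b3 + a2 + a2*b2 + a1*b1, a3 - 1*a3*b2 + a2*b3⟩ : ℍ[ℝ]) = 0
  case neg => exact helper_conj _ _ _ c1 m1A m1B
  by_cases c2 : (⟨a3 + a3*b2 - 1*a2*b3, b1 - 1*a3*b3 + a2 - 1*a2*b2 - 1*a1*b1, 1 + b2 + a2*b1 - 1*a1 - 1*a1*b2, b3 + a3*b1 - 1*a1*b3⟩ : ℍ[ℝ]) = 0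
  case neg => exact helper_conj _ _ _ c2 m2A m2B
  by_cases c3 : (⟨b1 - 1*a3*b3 - 1*a2 - 1*a2*b2 - 1*a1*b1, a3 - 1*a3*b2 + a2*b3, b3 + a3*b1 - 1*a1*b3, 1 - 1*b2 - 1*a2*b1 - 1*a1 + a1*b2⟩ : ℍ[ℝ]) = 0
  case neg => exact helper_conj _ _ _ c3 m3A m3B
  exfalso
  have e0 : (1 + b2 - 1*a2*b1 + a1 + a1*b2) = 0 := by simpa using congrArg QuaternionAlgebra.re c0
  have e1 : (1 - 1*b2 + a2*b1 + a1 - 1*a1*b2) = 0 := by simpa using congrArg QuaternionAlgebra.imI c1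
  have e2 : (1 + b2 + a2*b1 - 1*a1 - 1*a1*b2) = 0 := by simpa using congrArg QuaternionAlgebra.imJ c2
  have e3 : (1 - 1*b2 - 1*a2*b1 - 1*a1 + a1*b2) = 0 := by simpa using congrArg QuaternionAlgebra.imK c3
  have hcontra : (4 : ℝ) = 0 := by linear_combination e0 + e1 + e2 + e3
  norm_num at hcontra
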